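/- Let r > 0 be a real number and let λ, u be real numbers. Then λ = [λ + r·u]_- if and only if the complementarity conditions hold: u ≥ 0, λ ≤ 0, and λ·u = 0. -/
import Mathlib


/-- Negative part of a real number: `[z]_- = min(0, z)`. -/
noncomputable def negpart (z : ℝ) : ℝ := min 0 z

/-- For `r > 0`, `λ = [λ + r u]_-` iff the complementarity conditions
`u ≥ 0`, `λ ≤ 0`, `λ * u = 0` hold. -/
theorem augLag_iff_complementarity (r l u : ℝ) (hr : 0 < r) :
    l = negpart (l + r * u) ↔ (u ≥ 0 ∧ l ≤ 0 ∧ l * u = 0) := by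
  unfold negpart
  rcases le_or_gt 0 (l + r * u) with h | h
  · rw [min_eq_left h]
    constructor
    · rintro rfl
      refine ⟨by nlinarith, le_refl 0, by ring⟩
    · rintro ⟨hu, hl, hlu⟩
      rcases hu.lt_or_eq with h2 | h2
      · have : l = 0 := by
          rcases mul_eq_zero.mp hlu with h3 | h3
          · exact h3
          · linarith
        linarith
      · nlinarith
  · rw [min_eq_right h.le]
    constructor
    · intro he
      have hu0 : r * u = 0 := by linarith
      have : u = 0 := by
        rcases mul_eq_zero.mp hu0 with h3 | h3
        · linarith
        · exact h3
      refine ⟨le_of_eq this.symm, by linarith, by rw [this]; ring⟩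
    · rintro ⟨hu, hl, hlu⟩
      have : u = 0 := by
        rcases mul_eq_zero.mp hlu with h3 | h3
        · nlinarith
        · exact h3
      rw [this]; ring_nf
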